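/- Let A be a finite set, Ω a finite set, K : Δ(A) × Ω → ℝ affine in its first argument, and A_m : Δ(Ω) ⇉ A an upper hemicontinuous correspondence with nonempty values. Define a Berk-Nash equilibrium as σ ∈ Δ(A) such that there exists π ∈ Δ(argmin_ω K(σ,ω)) with supp(σ) ⊆ A_m(π). Then the set of Berk-Nash equilibria is a compact subset of Δ(A). -/

import Mathlib

open Filter Finset

/-- **Compactness of the set of Berk-Nash equilibria.**
Let `A` be a finite action set, `Θ` a finite parameter set, `K : Δ(A) × Θ → ℝ` affine
in its first argument (represented by the linear form `K σ θ = ∑ a, σ a * D a θ`), and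
`Am : Δ(Θ) ⇉ A` an upper hemicontinuous correspondence (for finite `A`, equivalently:
`{π | a ∈ Am π}` is closed for each `a`) with nonempty values.  A Berk-Nash
equilibrium is a `σ ∈ Δ(A)` such that there exists `π ∈ Δ(Θ)` supported on
`argmin_θ K(σ,θ)` with `supp σ ⊆ Am π`.  The set of Berk-Nash equilibria is a compact
subset of `Δ(A)`. -/
theorem berkNash_equilibria_isCompact
    {A : Type*} [Fintype A] {Θ : Type*} [Fintype Θ]
    (D : A → Θ → ℝ)
    (K : (A → ℝ) → Θ → ℝ)
    (hK_affine : ∀ σ θ, K σ θ = ∑ a, σ a * D a θ)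
    (Am : (Θ → ℝ) → Set A)
    (hAm_nonempty : ∀ π, (Am π).Nonempty)
    (hAm_uhc : ∀ a : A, IsClosed {π : Θ → ℝ | a ∈ Am π}) :
    IsCompact {σ : A → ℝ |
      ((∀ a, 0 ≤ σ a) ∧ ∑ a, σ a = 1) ∧
      ∃ π : Θ → ℝ, ((∀ θ, 0 ≤ π θ) ∧ ∑ θ, π θ = 1) ∧
        (∀ θ, 0 < π θ → ∀ θ' : Θ, K σ θ ≤ K σ θ') ∧
        (∀ a, 0 < σ a → a ∈ Am π)} := by
  classical
  have hKc : ∀ θ : Θ, Continuous fun p : (A → ℝ) × (Θ → ℝ) => K p.1 θ := by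
    intro θ
    have h : (fun p : (A → ℝ) × (Θ → ℝ) => K p.1 θ)
        = fun p => ∑ a, p.1 a * D a θ := by
      funext p; exact hK_affine p.1 θ
    rw [h]
    exact continuous_finset_sum _ fun a _ =>
      ((continuous_apply a).comp continuous_fst).mul continuous_const
  set T : Set ((A → ℝ) × (Θ → ℝ)) :=
    (stdSimplex ℝ A ×ˢ stdSimplex ℝ Θ) ∩
      ({p | ∀ θ θ' : Θ, 0 < p.2 θ → K p.1 θ ≤ K p.1 θ'} ∩
       {p | ∀ a, 0 < p.1 a → a ∈ Am p.2}) with hT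
  have hTc : IsCompact T := by
    apply ((isCompact_stdSimplex ℝ A).prod (isCompact_stdSimplex ℝ Θ)).inter_right
    apply IsClosed.inter
    · have h : {p : (A → ℝ) × (Θ → ℝ) | ∀ θ θ' : Θ, 0 < p.2 θ → K p.1 θ ≤ K p.1 θ'}
          = ⋂ θ, ⋂ θ', {p : (A → ℝ) × (Θ → ℝ) | p.2 θ ≤ 0} ∪ {p | K p.1 θ ≤ K p.1 θ'} := by
        ext p
        simp only [Set.mem_setOf_eq, Set.mem_iInter, Set.mem_union, or_iff_not_imp_left, not_le]
      rw [h]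
      refine isClosed_iInter fun θ => isClosed_iInter fun θ' => IsClosed.union ?_ ?_
      · exact isClosed_le ((continuous_apply θ).comp continuous_snd) continuous_const
      · exact isClosed_le (hKc θ) (hKc θ')
    · have h : {p : (A → ℝ) × (Θ → ℝ) | ∀ a, 0 < p.1 a → a ∈ Am p.2}
          = ⋂ a, {p : (A → ℝ) × (Θ → ℝ) | p.1 a ≤ 0} ∪ {p | a ∈ Am p.2} := by
        ext p
        simp only [Set.mem_setOf_eq, Set.mem_iInter, Set.mem_union, or_iff_not_imp_left, not_le]
      rw [h]
      refine isClosed_iInter fun a => IsClosed.union ?_ ?_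
      · exact isClosed_le ((continuous_apply a).comp continuous_fst) continuous_const
      · exact (hAm_uhc a).preimage continuous_snd
  have himg : {σ : A → ℝ |
      ((∀ a, 0 ≤ σ a) ∧ ∑ a, σ a = 1) ∧
      ∃ π : Θ → ℝ, ((∀ θ, 0 ≤ π θ) ∧ ∑ θ, π θ = 1) ∧
        (∀ θ, 0 < π θ → ∀ θ' : Θ, K σ θ ≤ K σ θ') ∧
        (∀ a, 0 < σ a → a ∈ Am π)} = Prod.fst '' T := by
    ext σ
    constructor
    · rintro ⟨⟨h1, h2⟩, π, ⟨h3, h4⟩, h5, h6⟩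
      exact ⟨(σ, π), ⟨⟨⟨h1, h2⟩, ⟨h3, h4⟩⟩, ⟨fun θ θ' h => h5 θ h θ', h6⟩⟩, rfl⟩
    · rintro ⟨⟨σ', π⟩, ⟨⟨hσ, hπ⟩, h5, h6⟩, rfl⟩
      exact ⟨hσ, π, hπ, fun θ h θ' => h5 θ θ' h, h6⟩
  rw [himg]
  exact hTc.image continuous_fst
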